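/- Let B and A be matrices with the same number of columns such that (5/6)BᵀB ⪯ AᵀA ⪯ (6/5)BᵀB, with BᵀB positive definite. For x₀ ∈ ℝ^d and η := Ax₀ − b, define z := x₀ − (BᵀB)^{-1}Aᵀη and x* := (AᵀA)^{-1}Aᵀb. Then (1/2)‖Az − Ax*‖₂² ≤ (4/10)‖Ax₀ − Ax*‖₂². -/

import Mathlib

open Matrix BigOperators

lemma dot_symm' {d : ℕ} (M : Matrix (Fin d) (Fin d) ℝ) (hM : Mᵀ = M)
    (x y : Fin d → ℝ) : x ⬝ᵥ (M *ᵥ y) = y ⬝ᵥ (M *ᵥ x) := by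
  rw [Matrix.dotProduct_mulVec, ← hM, Matrix.vecMul_transpose, dotProduct_comm, hM]

lemma dot_AA {n d : ℕ} (A : Matrix (Fin n) (Fin d) ℝ) (v : Fin d → ℝ) :
    (A *ᵥ v) ⬝ᵥ (A *ᵥ v) = v ⬝ᵥ ((Aᵀ * A) *ᵥ v) := by
  rw [← Matrix.mulVec_mulVec]
  conv_rhs => rw [Matrix.dotProduct_mulVec, Matrix.vecMul_transpose]

lemma expand_sub {d : ℕ} (M : Matrix (Fin d) (Fin d) ℝ) (x y : Fin d → ℝ) :
    (x - y) ⬝ᵥ (M *ᵥ (x - y)) =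
      x ⬝ᵥ (M *ᵥ x) - x ⬝ᵥ (M *ᵥ y) - y ⬝ᵥ (M *ᵥ x) + y ⬝ᵥ (M *ᵥ y) := by
  simp only [Matrix.mulVec_sub, dotProduct_sub, sub_dotProduct]
  ring

lemma expand_smul_sub {d : ℕ} (M : Matrix (Fin d) (Fin d) ℝ) (t : ℝ) (x y : Fin d → ℝ) :
    (x - t • y) ⬝ᵥ (M *ᵥ (x - t • y)) =
      x ⬝ᵥ (M *ᵥ x) - t * (x ⬝ᵥ (M *ᵥ y)) - t * (y ⬝ᵥ (M *ᵥ x))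
        + t ^ 2 * (y ⬝ᵥ (M *ᵥ y)) := by
  simp only [Matrix.mulVec_sub, Matrix.mulVec_smul, dotProduct_sub,
    sub_dotProduct, dotProduct_smul, smul_dotProduct, smul_eq_mul]
  ring

theorem stmt_8 {n m d : ℕ} (A : Matrix (Fin n) (Fin d) ℝ) (B : Matrix (Fin m) (Fin d) ℝ)
    (b : Fin n → ℝ) (x₀ z xs : Fin d → ℝ)
    (hB : (Bᵀ * B).PosDef)
    (hlow : ∀ x : Fin d → ℝ, (5 / 6) * (x ⬝ᵥ ((Bᵀ * B) *ᵥ x)) ≤ x ⬝ᵥ ((Aᵀ * A) *ᵥ x))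
    (hup : ∀ x : Fin d → ℝ, x ⬝ᵥ ((Aᵀ * A) *ᵥ x) ≤ (6 / 5) * (x ⬝ᵥ ((Bᵀ * B) *ᵥ x)))
    (hz : z = x₀ - (Bᵀ * B)⁻¹ *ᵥ (Aᵀ *ᵥ (A *ᵥ x₀ - b)))
    (hxs : xs = (Aᵀ * A)⁻¹ *ᵥ (Aᵀ *ᵥ b)) :
    (1 / 2) * ((A *ᵥ z - A *ᵥ xs) ⬝ᵥ (A *ᵥ z - A *ᵥ xs)) ≤
      (4 / 10) * ((A *ᵥ x₀ - A *ᵥ xs) ⬝ᵥ (A *ᵥ x₀ - A *ᵥ xs)) := by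
  set M := Bᵀ * B with hMdef
  set N := Aᵀ * A with hNdef
  have hMsym : Mᵀ = M := (Matrix.isHermitian_conjTranspose_mul_self B).eq
  have hNsym : Nᵀ = N := (Matrix.isHermitian_conjTranspose_mul_self A).eq
  have hN : N.PosDef := by
    refine Matrix.PosDef.of_dotProduct_mulVec_pos (Matrix.isHermitian_conjTranspose_mul_self A) fun x hx => ?_
    have h1 := hB.dotProduct_mulVec_pos hx
    have h2 := hlow x
    simp only [star_trivial] at h1 ⊢
    have hp : (0:ℝ) < x ⬝ᵥ (M *ᵥ x) := by simpa using h1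
    calc (0:ℝ) < (5/6) * (x ⬝ᵥ (M *ᵥ x)) := by linarith
      _ ≤ x ⬝ᵥ (N *ᵥ x) := h2
  have hNdet : IsUnit N.det := isUnit_iff_ne_zero.mpr hN.det_pos.ne'
  have hMdet : IsUnit M.det := isUnit_iff_ne_zero.mpr hB.det_pos.ne'
  set e := x₀ - xs with hedef
  set u := M⁻¹ *ᵥ (N *ᵥ e) with hudef
  have hNxs : N *ᵥ xs = Aᵀ *ᵥ b := by
    rw [hxs, Matrix.mulVec_mulVec, Matrix.mul_nonsing_inv _ hNdet, Matrix.one_mulVec]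
  have hMu : M *ᵥ u = N *ᵥ e := by
    rw [hudef, Matrix.mulVec_mulVec, Matrix.mul_nonsing_inv _ hMdet, Matrix.one_mulVec]
  have hzxs : z - xs = e - u := by
    rw [hz, hudef, hedef]
    have h : Aᵀ *ᵥ (A *ᵥ x₀ - b) = N *ᵥ (x₀ - xs) := by
      rw [Matrix.mulVec_sub, Matrix.mulVec_sub, Matrix.mulVec_mulVec, ← hNdef, ← hNxs]
    rw [h]
    abel
  have hAz : A *ᵥ z - A *ᵥ xs = A *ᵥ (e - u) := by
    rw [← Matrix.mulVec_sub, hzxs]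
  have hAx : A *ᵥ x₀ - A *ᵥ xs = A *ᵥ e := by
    rw [← Matrix.mulVec_sub, ← hedef]
  have hpsd0 : 0 ≤ (u - (5/6:ℝ) • e) ⬝ᵥ (M *ᵥ (u - (5/6:ℝ) • e)) := by
    have := hB.posSemidef.dotProduct_mulVec_nonneg (u - (5/6:ℝ) • e); simpa using this
  have hmm0 : 0 ≤ e ⬝ᵥ (M *ᵥ e) := by
    have := hB.posSemidef.dotProduct_mulVec_nonneg e; simpa using this
  clear_value e u
  rw [hAz, hAx, dot_AA, dot_AA, ← hNdef]
  have heMu : e ⬝ᵥ (M *ᵥ u) = e ⬝ᵥ (N *ᵥ e) := by rw [hMu]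
  have huNe : u ⬝ᵥ (N *ᵥ e) = u ⬝ᵥ (M *ᵥ u) := by rw [← hMu]
  have heNu : e ⬝ᵥ (N *ᵥ u) = u ⬝ᵥ (M *ᵥ u) := by rw [dot_symm' N hNsym, huNe]
  have huMe : u ⬝ᵥ (M *ᵥ e) = e ⬝ᵥ (N *ᵥ e) := by rw [dot_symm' M hMsym, heMu]
  rw [expand_sub]
  rw [expand_smul_sub] at hpsd0
  rw [heMu, huMe] at hpsd0
  rw [heNu, huNe]
  have h1 := hlow e
  have h2 := hup u
  nlinarith [hpsd0, h1, h2, hmm0]
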